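/- Let g have dimension 4 and let (J, R, σ) be a generalized complex structure on g of type 1. For every basis (e₁, e₂) of Im R and every nonzero e₃ in ker σ, setting e₄ := J e₃, the family (e₁, e₂, e₃, e₄) is a basis of g, and there exist λ in ℝ and a ≠ 0 such that J e₁ = λ e₁, J e₂ = λ e₂, J e₃ = e₄, J e₄ = -e₃, R(α) = a (α(e₁) e₂ - α(e₂) e₁) for all α in g*, and σ(u)(v) = a⁻¹ (1 + λ²)(e¹(u) e²(v) - e²(u) e¹(v)) for all u, v in g, where (e¹, e², e³, e⁴) denotes the dual basis. -/

import Mathlib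

open Module LinearMap

variable {g : Type*} [LieRing g] [LieAlgebra ℝ g]

/-- The coadjoint action: `(coad u α) v = -α ⁅u, v⁆`. -/
noncomputable def coad (u : g) (α : Module.Dual ℝ g) : Module.Dual ℝ g :=
  -(α ∘ₗ (LieAlgebra.ad ℝ g u : g →ₗ[ℝ] g))

/-- The bracket `⁅u + α, v + β⁆▷ = ⁅u, v⁆ + ad*_u β - ad*_v α` on `g ⊕ g*`. -/
noncomputable def dbracket (a b : g × Module.Dual ℝ g) : g × Module.Dual ℝ g :=
  (⁅a.1, b.1⁆, coad a.1 b.2 - coad b.1 a.2)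

/-- The neutral pairing `⟨u + α, v + β⟩ = (α v + β u)/2` on `g ⊕ g*`. -/
noncomputable def pairing (a b : g × Module.Dual ℝ g) : ℝ :=
  (a.2 b.1 + b.2 a.1) / 2

/-- `dτ(u,v,w) = -τ(⁅u,v⁆,w) + τ(⁅u,w⁆,v) - τ(⁅v,w⁆,u)`. -/
noncomputable def dForm (τ : g → g → ℝ) (u v w : g) : ℝ :=
  -τ ⁅u, v⁆ w + τ ⁅u, w⁆ v - τ ⁅v, w⁆ u

/-- The linear functional `w ↦ dσ^b(u,v,w)`. -/
noncomputable def dSigma (σ : g →ₗ[ℝ] Module.Dual ℝ g) (u v : g) : Module.Dual ℝ g :=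
  -σ ⁅u, v⁆ + (σ.flip v) ∘ₗ (LieAlgebra.ad ℝ g u : g →ₗ[ℝ] g)
    - (σ.flip u) ∘ₗ (LieAlgebra.ad ℝ g v : g →ₗ[ℝ] g)

/-- A generalized complex structure on a Lie algebra `g`. -/
structure IsGCS (J : g →ₗ[ℝ] g) (R : Module.Dual ℝ g →ₗ[ℝ] g)
    (σ : g →ₗ[ℝ] Module.Dual ℝ g) : Prop where
  skewR : ∀ α β : Module.Dual ℝ g, α (R β) = -β (R α)
  skewσ : ∀ u v : g, σ u v = -σ v u
  c0a : J ∘ₗ J + R ∘ₗ σ = -LinearMap.id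
  c0b : J ∘ₗ R = R ∘ₗ J.dualMap
  c0c : σ ∘ₗ J = J.dualMap ∘ₗ σ
  c1 : ∀ α β γ : Module.Dual ℝ g, α ⁅R β, R γ⁆ + β ⁅R γ, R α⁆ + γ ⁅R α, R β⁆ = 0
  c2 : ∀ α β : Module.Dual ℝ g,
    J.dualMap (coad (R α) β - coad (R β) α)
      = coad (R α) (J.dualMap β) - coad (R β) (J.dualMap α)
  c3 : ∀ u v : g, ⁅J u, J v⁆ - J ⁅J u, v⁆ - J ⁅u, J v⁆ + J (J ⁅u, v⁆) = R (dSigma σ u v)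
  c4 : ∀ u v w : g, dForm (fun a b => σ (J a) b) u v w =
    dForm (fun a b => σ a b) (J u) v w + dForm (fun a b => σ a b) u (J v) w +
      dForm (fun a b => σ a b) u v (J w)

/-- The endomorphism of `g ⊕ g*` associated to a triple `(J, R, σ)`. -/
noncomputable def Kmap (J : g →ₗ[ℝ] g) (R : Module.Dual ℝ g →ₗ[ℝ] g)
    (σ : g →ₗ[ℝ] Module.Dual ℝ g) (a : g × Module.Dual ℝ g) : g × Module.Dual ℝ g :=
  (J a.1 + R a.2, σ a.1 - J.dualMap a.2)

/-- A generalized Kähler structure on a Lie algebra `g`. -/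
structure IsGK (J₁ : g →ₗ[ℝ] g) (R₁ : Module.Dual ℝ g →ₗ[ℝ] g)
    (σ₁ : g →ₗ[ℝ] Module.Dual ℝ g) (J₂ : g →ₗ[ℝ] g) (R₂ : Module.Dual ℝ g →ₗ[ℝ] g)
    (σ₂ : g →ₗ[ℝ] Module.Dual ℝ g) : Prop where
  gcs₁ : IsGCS J₁ R₁ σ₁
  gcs₂ : IsGCS J₂ R₂ σ₂
  comm : ∀ x : g × Module.Dual ℝ g,
    Kmap J₁ R₁ σ₁ (Kmap J₂ R₂ σ₂ x) = Kmap J₂ R₂ σ₂ (Kmap J₁ R₁ σ₁ x)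
  symm : ∀ x y : g × Module.Dual ℝ g,
    pairing (Kmap J₁ R₁ σ₁ (Kmap J₂ R₂ σ₂ x)) y = pairing (Kmap J₁ R₁ σ₁ (Kmap J₂ R₂ σ₂ y)) x
  posdef : ∀ x : g × Module.Dual ℝ g, x ≠ 0 → 0 < pairing (Kmap J₁ R₁ σ₁ (Kmap J₂ R₂ σ₂ x)) x


set_option maxHeartbeats 2000000 in
/-- normal form of a type-1 generalized complex structure in an adapted
basis. -/
theorem gcs_type1_normal_form [FiniteDimensional ℝ g]
    (hdim : Module.finrank ℝ g = 4)
    (J : g →ₗ[ℝ] g) (R : Module.Dual ℝ g →ₗ[ℝ] g) (σ : g →ₗ[ℝ] Module.Dual ℝ g)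
    (h : IsGCS J R σ) (htype : Module.finrank ℝ (LinearMap.range R) = 2)
    (e₁ e₂ : g) (hind : LinearIndependent ℝ ![e₁, e₂])
    (hspan : Submodule.span ℝ {e₁, e₂} = LinearMap.range R)
    (e₃ : g) (he₃ : σ e₃ = 0) (hne : e₃ ≠ 0) :
    ∃ (B : Basis (Fin 4) ℝ g) (lam a : ℝ), a ≠ 0 ∧
      B 0 = e₁ ∧ B 1 = e₂ ∧ B 2 = e₃ ∧ B 3 = J e₃ ∧
      J (B 0) = lam • B 0 ∧ J (B 1) = lam • B 1 ∧ J (B 2) = B 3 ∧ J (B 3) = -B 2 ∧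
      (∀ α : Module.Dual ℝ g, R α = a • (α (B 0) • B 1 - α (B 1) • B 0)) ∧
      (∀ u v : g, σ u v =
        a⁻¹ * (1 + lam ^ 2) * (B.coord 0 u * B.coord 1 v - B.coord 1 u * B.coord 0 v)) := by
  -- pointwise versions of the axioms
  have hc0a : ∀ u : g, J (J u) + R (σ u) = -u := fun u => by
    simpa using LinearMap.ext_iff.mp h.c0a u
  have hJR : ∀ α, J (R α) = R (J.dualMap α) := fun α => by
    simpa using LinearMap.ext_iff.mp h.c0b α
  have hσJ : ∀ u, σ (J u) = J.dualMap (σ u) := fun u => by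
    simpa using LinearMap.ext_iff.mp h.c0c u
  have hselfR : ∀ α : Module.Dual ℝ g, α (R α) = 0 := fun α => by
    have := h.skewR α α; linarith
  have hselfσ : ∀ u : g, σ u u = 0 := fun u => by have := h.skewσ u u; linarith
  have hne1 : e₁ ≠ 0 := by
    have := hind.ne_zero 0; simpa using this
  have hne2 : e₁ ≠ e₂ := by
    intro hh
    have := hind.injective (by simp [hh] : ![e₁,e₂] 0 = ![e₁,e₂] 1)
    simp at this
  -- dual functionals f₁ f₂ with fᵢ eⱼ = δᵢⱼ
  obtain ⟨f₁, f₂, hf11, hf12, hf21, hf22⟩ :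
      ∃ f₁ f₂ : Module.Dual ℝ g, f₁ e₁ = 1 ∧ f₁ e₂ = 0 ∧ f₂ e₁ = 0 ∧ f₂ e₂ = 1 := by
    have hs : LinearIndepOn ℝ id (Set.range ![e₁,e₂]) := (linearIndepOn_id_range_iff hind.injective).mpr hind
    have h1 : e₁ ∈ Set.range ![e₁,e₂] := ⟨0, rfl⟩
    have h2 : e₂ ∈ Set.range ![e₁,e₂] := ⟨1, rfl⟩
    let B0 := Basis.extend hs
    have m1 : e₁ ∈ hs.extend (Set.subset_univ _) := hs.subset_extend _ h1
    have m2 : e₂ ∈ hs.extend (Set.subset_univ _) := hs.subset_extend _ h2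
    have hb1 : B0 ⟨e₁, m1⟩ = e₁ := Basis.extend_apply_self hs _
    have hb2 : B0 ⟨e₂, m2⟩ = e₂ := Basis.extend_apply_self hs _
    have hsub : (⟨e₁, m1⟩ : hs.extend (Set.subset_univ _)) ≠ ⟨e₂, m2⟩ := by
      simp [Subtype.ext_iff, hne2]
    have r1 := B0.repr_self ⟨e₁, m1⟩
    have r2 := B0.repr_self ⟨e₂, m2⟩
    rw [hb1] at r1; rw [hb2] at r2
    refine ⟨B0.coord ⟨e₁, m1⟩, B0.coord ⟨e₂, m2⟩, ?_, ?_, ?_, ?_⟩ <;>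
      simp [Basis.coord_apply, r1, r2, Finsupp.single_apply, hsub, hsub.symm]
  -- membership of R α in span {e₁, e₂} and coordinates there
  have hV : ∀ α, R α ∈ Submodule.span ℝ ({e₁, e₂} : Set g) := fun α => by
    rw [hspan]; exact ⟨α, rfl⟩
  have coordV : ∀ v ∈ Submodule.span ℝ ({e₁, e₂} : Set g), f₁ v • e₁ + f₂ v • e₂ = v := by
    intro v hv
    obtain ⟨x, y, rfl⟩ := Submodule.mem_span_pair.mp hv
    simp [map_add, map_smul, hf11, hf12, hf21, hf22]
  set a : ℝ := f₂ (R f₁) with ha_def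
  have hRf1 : R f₁ = a • e₂ := by
    have h0 := coordV (R f₁) (hV f₁)
    rw [hselfR f₁] at h0
    rw [← h0]; simp; rfl
  have hRf2 : R f₂ = (-a) • e₁ := by
    have h0 := coordV (R f₂) (hV f₂)
    rw [hselfR f₂, h.skewR f₁ f₂] at h0
    rw [← h0]; simp; rfl
  have hR : ∀ α, R α = a • (α e₁ • e₂ - α e₂ • e₁) := by
    intro α
    have h0 := coordV (R α) (hV α)
    have k1 : f₁ (R α) = -(a * α e₂) := by
      have hk := h.skewR f₁ α
      rw [hRf1] at hk
      simpa [mul_comm] using hk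
    have k2 : f₂ (R α) = a * α e₁ := by
      have hk := h.skewR f₂ α
      rw [hRf2] at hk
      simpa [mul_comm] using hk
    rw [k1, k2] at h0
    rw [← h0]; module
  have ha : a ≠ 0 := by
    intro h0
    have he₁mem : e₁ ∈ LinearMap.range R := by
      rw [← hspan]; exact Submodule.subset_span (by simp)
    obtain ⟨α, hα⟩ := he₁mem
    refine hne1 ?_
    rw [← hα, hR α, h0]; simp
  -- e₁ and e₂ as values of R
  have he₁R : R ((-(a⁻¹)) • f₂) = e₁ := by
    rw [map_smul, hRf2, smul_smul]
    have hh : -a⁻¹ * -a = 1 := by field_simp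
    rw [hh, one_smul]
  have he₂R : R (a⁻¹ • f₁) = e₂ := by
    rw [map_smul, hRf1, smul_smul]
    have hh : a⁻¹ * a = 1 := inv_mul_cancel₀ ha
    rw [hh, one_smul]
  set lam : ℝ := f₁ (J e₁) with hlam_def
  -- J is scalar multiplication by lam on span {e₁, e₂}
  have hJe₁' : J e₁ = R (J.dualMap ((-(a⁻¹)) • f₂)) := by rw [← hJR, he₁R]
  have hJe₂' : J e₂ = R (J.dualMap (a⁻¹ • f₁)) := by rw [← hJR, he₂R]
  have hJe₁ : J e₁ = lam • e₁ := by
    have hmem : J e₁ ∈ Submodule.span ℝ ({e₁, e₂} : Set g) := hJe₁' ▸ hV _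
    have h0 := coordV (J e₁) hmem
    have k : f₂ (J e₁) = 0 := by
      have k0 : f₂ (J e₁) = -((J.dualMap ((-(a⁻¹)) • f₂)) (R f₂)) := by
        rw [hJe₁']; exact h.skewR f₂ _
      rw [LinearMap.dualMap_apply, hRf2, map_smul, LinearMap.smul_apply, map_smul,
        smul_eq_mul, smul_eq_mul] at k0
      have hinv : a⁻¹ * a = 1 := inv_mul_cancel₀ ha
      have k0' : f₂ (J e₁) = -((a⁻¹ * a) * f₂ (J e₁)) := by
        conv_lhs => rw [k0]
        ring
      rw [hinv, one_mul] at k0'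
      linarith
    rw [k] at h0
    rw [← h0]; simp; rfl
  have hJe₂ : J e₂ = lam • e₂ := by
    have hmem : J e₂ ∈ Submodule.span ℝ ({e₁, e₂} : Set g) := hJe₂' ▸ hV _
    have h0 := coordV (J e₂) hmem
    have k1 : f₁ (J e₂) = 0 := by
      have k0 : f₁ (J e₂) = -((J.dualMap (a⁻¹ • f₁)) (R f₁)) := by
        rw [hJe₂']; exact h.skewR f₁ _
      rw [LinearMap.dualMap_apply, hRf1, map_smul, LinearMap.smul_apply, map_smul,
        smul_eq_mul, smul_eq_mul] at k0
      have hinv : a⁻¹ * a = 1 := inv_mul_cancel₀ ha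
      have k0' : f₁ (J e₂) = -((a⁻¹ * a) * f₁ (J e₂)) := by
        conv_lhs => rw [k0]
        ring
      rw [hinv, one_mul] at k0'
      linarith
    have k2 : f₂ (J e₂) = lam := by
      have k0 : f₂ (J e₂) = -((J.dualMap (a⁻¹ • f₁)) (R f₂)) := by
        rw [hJe₂']; exact h.skewR f₂ _
      rw [LinearMap.dualMap_apply, hRf2, map_smul, LinearMap.smul_apply, map_smul,
        smul_eq_mul, smul_eq_mul] at k0
      have hinv : a⁻¹ * a = 1 := inv_mul_cancel₀ ha
      have k0' : f₂ (J e₂) = (a⁻¹ * a) * f₁ (J e₁) := by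
        conv_lhs => rw [k0]
        ring
      rw [hinv, one_mul] at k0'
      rw [hlam_def]
      exact k0' 
    rw [k1, k2] at h0
    rw [← h0]; simp
  -- behaviour on e₃ and e₄ = J e₃
  have hσe₄ : σ (J e₃) = 0 := by rw [hσJ, he₃, map_zero]
  have hJe₄ : J (J e₃) = -e₃ := by
    have h0 := hc0a e₃
    rw [he₃, map_zero, add_zero] at h0
    exact h0
  set s : ℝ := σ e₁ e₂ with hs_def
  have has : a * s = 1 + lam ^ 2 := by
    have h0 := hc0a e₁
    rw [hJe₁, map_smul, hJe₁, hR (σ e₁), hselfσ e₁] at h0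
    have h1 : (lam ^ 2 - a * s + 1) • e₁ = (0 : g) := by
      linear_combination (norm := module) h0
    rcases smul_eq_zero.mp h1 with h2 | h2
    · linarith [h2]
    · exact absurd h2 hne1
  have hs0 : s ≠ 0 := by
    intro h0
    rw [h0, mul_zero] at has
    nlinarith [sq_nonneg lam]
  -- useful vanishing facts for σ
  have z3 : ∀ u : g, σ u e₃ = 0 := fun u => by rw [h.skewσ u e₃, he₃]; simp
  have z4 : ∀ u : g, σ u (J e₃) = 0 := fun u => by rw [h.skewσ u (J e₃), hσe₄]; simp
  have z3' : ∀ u : g, σ e₃ u = 0 := fun u => by rw [he₃]; rfl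
  have z4' : ∀ u : g, σ (J e₃) u = 0 := fun u => by rw [hσe₄]; rfl
  -- linear independence of (e₁, e₂, e₃, J e₃)
  have hli : LinearIndependent ℝ ![e₁, e₂, e₃, J e₃] := by
    rw [Fintype.linearIndependent_iff]
    intro c hc
    rw [Fin.sum_univ_four] at hc
    simp only [Matrix.cons_val_zero, Matrix.cons_val_one, Matrix.head_cons,
      Matrix.cons_val_two, Matrix.tail_cons, Matrix.cons_val_three] at hc
    have h1 : c 0 = 0 := by
      have := congrArg (fun w => σ w e₂) hc
      simp only [map_add, map_smul, LinearMap.add_apply, LinearMap.smul_apply,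
        smul_eq_mul, z3', z4', hselfσ, map_zero, LinearMap.zero_apply] at this
      rw [← hs_def] at this
      have : c 0 * s = 0 := by linarith [this]
      exact (mul_eq_zero.mp this).resolve_right hs0
    have h2 : c 1 = 0 := by
      have := congrArg (fun w => σ w e₁) hc
      simp only [map_add, map_smul, LinearMap.add_apply, LinearMap.smul_apply,
        smul_eq_mul, z3', z4', hselfσ, map_zero, LinearMap.zero_apply] at this
      rw [h.skewσ e₂ e₁, ← hs_def] at this
      have : c 1 * s = 0 := by linarith [this]
      exact (mul_eq_zero.mp this).resolve_right hs0
    rw [h1, h2, zero_smul, zero_smul, zero_add, zero_add] at hc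
    have h4 : c 3 = 0 := by
      by_contra h4
      have hJ3 : J e₃ = (-(c 2 / c 3)) • e₃ := by
        have h5 : c 3 • J e₃ = (-(c 2)) • e₃ := by
          linear_combination (norm := module) hc
        have h6 := congrArg (fun w => (c 3)⁻¹ • w) h5
        simp only [smul_smul] at h6
        rw [inv_mul_cancel₀ h4, one_smul] at h6
        rw [h6]
        congr 1
        field_simp
      have : -e₃ = (c 2 / c 3) ^ 2 • e₃ := by
        rw [← hJe₄, hJ3, map_smul, hJ3, smul_smul]
        congr 1
        ring
      have h5 : (1 + (c 2 / c 3) ^ 2) • e₃ = (0 : g) := by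
        linear_combination (norm := module) this.symm
      rcases smul_eq_zero.mp h5 with h6 | h6
      · nlinarith [sq_nonneg (c 2 / c 3)]
      · exact hne h6
    rw [h4, zero_smul, add_zero] at hc
    have h3 : c 2 = 0 := by
      rcases smul_eq_zero.mp hc with h6 | h6
      · exact h6
      · exact absurd h6 hne
    intro i
    fin_cases i <;> assumption
  -- the adapted basis
  have hcard : Fintype.card (Fin 4) = Module.finrank ℝ g := by simp [hdim]
  let B : Basis (Fin 4) ℝ g := basisOfLinearIndependentOfCardEqFinrank hli hcard
  have hB : ⇑B = ![e₁, e₂, e₃, J e₃] :=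
    coe_basisOfLinearIndependentOfCardEqFinrank hli hcard
  have hB0 : B 0 = e₁ := by rw [hB]; rfl
  have hB1 : B 1 = e₂ := by rw [hB]; rfl
  have hB2 : B 2 = e₃ := by rw [hB]; rfl
  have hB3 : B 3 = J e₃ := by rw [hB]; rfl
  have rep1 : B.repr e₁ = Finsupp.single 0 1 := by rw [← hB0]; exact B.repr_self 0
  have rep2 : B.repr e₂ = Finsupp.single 1 1 := by rw [← hB1]; exact B.repr_self 1
  have rep3 : B.repr e₃ = Finsupp.single 2 1 := by rw [← hB2]; exact B.repr_self 2
  have rep4 : B.repr (J e₃) = Finsupp.single 3 1 := by rw [← hB3]; exact B.repr_self 3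
  -- the formula for σ
  have hσL : σ = s • ((B.coord 0).smulRight (B.coord 1) - (B.coord 1).smulRight (B.coord 0)) := by
    apply B.ext
    intro i
    apply B.ext
    intro j
    fin_cases i <;> fin_cases j <;>
      simp [hB0, hB1, hB2, hB3, Basis.coord_apply, rep1, rep2, rep3, rep4,
        Finsupp.single_apply, LinearMap.smul_apply, LinearMap.sub_apply,
        LinearMap.smulRight_apply, hselfσ, z3, z4, z3', z4', smul_eq_mul,
        ← hs_def, h.skewσ e₂ e₁]
  have hsval : s = a⁻¹ * (1 + lam ^ 2) := by
    rw [← has]; field_simp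
  refine ⟨B, lam, a, ha, hB0, hB1, hB2, hB3, ?_, ?_, ?_, ?_, ?_, ?_⟩
  · rw [hB0]; exact hJe₁
  · rw [hB1]; exact hJe₂
  · rw [hB2, hB3]
  · rw [hB3, hB2]; exact hJe₄
  · intro α; rw [hB0, hB1]; exact hR α
  · intro u v
    rw [hσL]
    simp only [LinearMap.smul_apply, LinearMap.sub_apply, LinearMap.smulRight_apply,
      smul_eq_mul]
    rw [hsval]
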